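/- arXiv:1806.09880 — 2 statements merged into one kernel-verified Lean document; each statement's English description precedes it below -/
import Mathlib

section
/- Let H : W → Y be a bounded linear operator between Hilbert spaces of finite rank N, with singular value decomposition H u = Σ_{i=1}^{N} σ_i ⟨u, f_i⟩ g_i, where σ_1 ≥ σ_2 ≥ … ≥ σ_N ≥ 0 and (f_i), (g_i) are orthonormal families in W and Y respectively. Let B be the closed unit ball of W. Then for 0 ≤ n < N, the Kolmogorov n-width of H(B) satisfies d_n(H(B)) = σ_{n+1}. -/
open scoped ENNReal RealInnerProductSpace

/-- The Kolmogorov `n`-width (valued in `[0,∞]`) of a subset `K` of a real Hilbert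
space `Y`. -/
noncomputable def kolmogorovWidth {Y : Type*} [NormedAddCommGroup Y]
    [InnerProductSpace ℝ Y] (K : Set Y) (n : ℕ) : ℝ≥0∞ :=
  ⨅ (V : Submodule ℝ Y) (_ : FiniteDimensional ℝ V ∧ Module.finrank ℝ V ≤ n),
    ⨆ y ∈ K, ⨅ z ∈ (V : Set Y), edist y z

lemma aux_norm_sq_sum {Y : Type*} [NormedAddCommGroup Y] [InnerProductSpace ℝ Y]
    {ι : Type*} {v : ι → Y} (hv : Orthonormal ℝ v) (l : ι → ℝ) (s : Finset ι) :
    ‖∑ i ∈ s, l i • v i‖ ^ 2 = ∑ i ∈ s, (l i) ^ 2 := by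
  rw [← real_inner_self_eq_norm_sq, hv.inner_sum]
  simp [sq]

/-- If `H : W → Y` is a bounded linear finite-rank operator with SVD
`H u = Σ_{i=1}^N σ_i ⟨u, f_i⟩ g_i` (`σ` nonincreasing and nonnegative, `(f_i)`, `(g_i)`
orthonormal) and `B` is the closed unit ball of `W`, then for `0 ≤ n < N`,
`d_n(H(B)) = σ_{n+1}`. -/
theorem kolmogorovWidth_image_unitBall_eq_singularValue
    {W Y : Type*} [NormedAddCommGroup W] [InnerProductSpace ℝ W] [CompleteSpace W]
    [NormedAddCommGroup Y] [InnerProductSpace ℝ Y] [CompleteSpace Y]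
    (H : W →L[ℝ] Y) (N : ℕ) (σ : Fin N → ℝ) (f : Fin N → W) (g : Fin N → Y)
    (hσ_mono : Antitone σ) (hσ_nonneg : ∀ i, 0 ≤ σ i)
    (hf : Orthonormal ℝ f) (hg : Orthonormal ℝ g)
    (hH : ∀ u, H u = ∑ i, (σ i * ⟪u, f i⟫) • g i)
    (n : ℕ) (hn : n < N) :
    kolmogorovWidth (H '' Metric.closedBall (0 : W) 1) n
      = ENNReal.ofReal (σ ⟨n, hn⟩) := by
  classical
  set k : Fin N := ⟨n, hn⟩ with hk
  set s : ℝ := σ k with hsdef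
  have hs0 : 0 ≤ s := hσ_nonneg k
  apply le_antisymm
  · -- upper bound
    set V : Submodule ℝ Y :=
      Submodule.span ℝ (Set.range (fun i : Fin n => g (Fin.castLE hn.le i))) with hV
    have hVfd : FiniteDimensional ℝ V :=
      FiniteDimensional.span_of_finite ℝ (Set.finite_range _)
    have hVrank : Module.finrank ℝ V ≤ n := by
      simpa [Set.finrank] using
        finrank_range_le_card (R := ℝ) (fun i : Fin n => g (Fin.castLE hn.le i))
    refine le_trans (iInf₂_le V ⟨hVfd, hVrank⟩) ?_
    refine iSup₂_le ?_
    rintro y ⟨u, hu, rfl⟩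
    have hunorm : ‖u‖ ≤ 1 := by simpa using hu
    set c : Fin N → ℝ := fun i => σ i * ⟪u, f i⟫ with hc
    set T : Finset (Fin N) := Finset.univ.filter (fun i => (i : ℕ) < n) with hT
    set z : Y := ∑ i ∈ T, c i • g i with hz
    have hzV : z ∈ V := by
      refine Submodule.sum_mem _ fun i hi => ?_
      have hi' : (i : ℕ) < n := (Finset.mem_filter.mp hi).2
      refine Submodule.smul_mem _ _ (Submodule.subset_span ⟨⟨(i : ℕ), hi'⟩, ?_⟩)
      rfl
    refine le_trans (iInf₂_le z hzV) ?_
    rw [edist_dist]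
    refine ENNReal.ofReal_le_ofReal ?_
    rw [dist_eq_norm]
    have hsplit : H u - z = ∑ i ∈ Finset.univ.filter (fun i : Fin N => ¬ (i : ℕ) < n),
        c i • g i := by
      rw [hH u, hz]
      rw [← Finset.sum_filter_add_sum_filter_not Finset.univ (fun i : Fin N => (i : ℕ) < n)
        (fun i => c i • g i)]
      simp [hT]
    have hnormsq : ‖H u - z‖ ^ 2 = ∑ i ∈ Finset.univ.filter (fun i : Fin N => ¬ (i : ℕ) < n),
        (c i) ^ 2 := by
      rw [hsplit, aux_norm_sq_sum hg]
    have hbessel : ∑ i : Fin N, ⟪u, f i⟫ ^ 2 ≤ ‖u‖ ^ 2 := by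
      have := hf.sum_inner_products_le (s := Finset.univ) (x := u)
      simpa [real_inner_comm, sq_abs] using this
    have hterm : ∀ i ∈ Finset.univ.filter (fun i : Fin N => ¬ (i : ℕ) < n),
        (c i) ^ 2 ≤ s ^ 2 * ⟪u, f i⟫ ^ 2 := by
      intro i hi
      have hi' : ¬ (i : ℕ) < n := (Finset.mem_filter.mp hi).2
      have hki : k ≤ i := by
        rw [Fin.le_def]
        exact le_of_not_gt hi'
      have : σ i ≤ s := hσ_mono hki
      have h0 : 0 ≤ σ i := hσ_nonneg i
      have : σ i ^ 2 ≤ s ^ 2 := by nlinarith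
      calc (c i) ^ 2 = σ i ^ 2 * ⟪u, f i⟫ ^ 2 := by rw [hc]; ring
        _ ≤ s ^ 2 * ⟪u, f i⟫ ^ 2 := by nlinarith [sq_nonneg (⟪u, f i⟫ : ℝ)]
    have hle : ‖H u - z‖ ^ 2 ≤ s ^ 2 := by
      rw [hnormsq]
      calc ∑ i ∈ Finset.univ.filter (fun i : Fin N => ¬ (i : ℕ) < n), (c i) ^ 2
          ≤ ∑ i ∈ Finset.univ.filter (fun i : Fin N => ¬ (i : ℕ) < n),
            s ^ 2 * ⟪u, f i⟫ ^ 2 := Finset.sum_le_sum hterm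
        _ ≤ ∑ i : Fin N, s ^ 2 * ⟪u, f i⟫ ^ 2 := by
            refine Finset.sum_le_sum_of_subset_of_nonneg (Finset.subset_univ _) ?_
            intro i _ _
            positivity
        _ = s ^ 2 * ∑ i : Fin N, ⟪u, f i⟫ ^ 2 := by rw [Finset.mul_sum]
        _ ≤ s ^ 2 * ‖u‖ ^ 2 := mul_le_mul_of_nonneg_left hbessel (sq_nonneg s)
        _ ≤ s ^ 2 * 1 := by
            have h1 : ‖u‖ ^ 2 ≤ 1 := by nlinarith [norm_nonneg u]
            exact mul_le_mul_of_nonneg_left h1 (sq_nonneg s)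
        _ = s ^ 2 := mul_one _
    nlinarith [norm_nonneg (H u - z)]
  · -- lower bound
    refine le_iInf fun V => le_iInf fun hVp => ?_
    obtain ⟨hVfd, hVle⟩ := hVp
    haveI := hVfd
    rcases eq_or_lt_of_le hs0 with hs0' | hspos
    · rw [← hs0', ENNReal.ofReal_zero]
      exact zero_le'
    · set g' : Fin (n + 1) → Y := fun i => g (Fin.castLE hn i) with hg'
      have hg'on : Orthonormal ℝ g' := hg.comp _ (Fin.castLE_injective hn)
      set X : Submodule ℝ Y := Submodule.span ℝ (Set.range g') with hX
      haveI hXfd : FiniteDimensional ℝ X :=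
        FiniteDimensional.span_of_finite ℝ (Set.finite_range _)
      have hXrank : Module.finrank ℝ X = n + 1 := by
        simpa using finrank_span_eq_card hg'on.linearIndependent
      set φ : X →ₗ[ℝ] V := ((V.orthogonalProjectionOnto).toLinearMap.comp
        (X.subtype.toContinuousLinearMap).toLinearMap) with hφ
      have hker : LinearMap.ker φ ≠ ⊥ := by
        intro hbot
        have h1 := LinearMap.finrank_range_add_finrank_ker φ
        rw [hbot, finrank_bot, hXrank] at h1
        have h2 : Module.finrank ℝ (LinearMap.range φ) ≤ Module.finrank ℝ V :=
          Submodule.finrank_le _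
        omega
      obtain ⟨y0, hy0ker, hy0ne⟩ := Submodule.exists_mem_ne_zero_of_ne_bot hker
      have hy0X : (y0 : Y) ∈ X := y0.2
      have hy0ne' : (y0 : Y) ≠ 0 := fun h => hy0ne (Subtype.ext h)
      have hproj : V.orthogonalProjectionOnto (y0 : Y) = 0 := hy0ker
      have hy0perp : (y0 : Y) ∈ Vᗮ := Submodule.orthogonalProjectionOnto_eq_zero_iff.mp hproj
      have hny0 : 0 < ‖(y0 : Y)‖ := norm_pos_iff.mpr hy0ne'
      set y1 : Y := (s / ‖(y0 : Y)‖) • (y0 : Y) with hy1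
      have hy1X : y1 ∈ X := Submodule.smul_mem _ _ hy0X
      have hy1perp : y1 ∈ Vᗮ := Submodule.smul_mem _ _ hy0perp
      have hy1norm : ‖y1‖ = s := by
        rw [hy1, norm_smul, Real.norm_eq_abs, abs_of_pos (div_pos hspos hny0),
          div_mul_cancel₀ _ (ne_of_gt hny0)]
      obtain ⟨c, hcrep⟩ := (Submodule.mem_span_range_iff_exists_fun ℝ).mp hy1X
      set σ' : Fin (n + 1) → ℝ := fun i => σ (Fin.castLE hn i) with hσ'
      have hσ'ge : ∀ i, s ≤ σ' i := by
        intro i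
        refine hσ_mono ?_
        rw [Fin.le_def]
        exact Nat.lt_succ_iff.mp i.2
      have hσ'pos : ∀ i, 0 < σ' i := fun i => lt_of_lt_of_le hspos (hσ'ge i)
      set u : W := ∑ i : Fin (n + 1), (c i / σ' i) • f (Fin.castLE hn i) with hu
      have hinner : ∀ j, ⟪u, f j⟫ =
          ∑ i : Fin (n + 1), (c i / σ' i) * (if Fin.castLE hn i = j then (1 : ℝ) else 0) := by
        intro j
        rw [hu, sum_inner]
        refine Finset.sum_congr rfl fun i _ => ?_
        rw [real_inner_smul_left, orthonormal_iff_ite.mp hf]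
      have hHu : H u = y1 := by
        rw [hH u, ← hcrep]
        calc ∑ j, (σ j * ⟪u, f j⟫) • g j
            = ∑ j, ∑ i : Fin (n + 1),
              (if Fin.castLE hn i = j then σ j * (c i / σ' i) else 0) • g j := by
              refine Finset.sum_congr rfl fun j _ => ?_
              rw [hinner j, Finset.mul_sum, Finset.sum_smul]
              refine Finset.sum_congr rfl fun i _ => ?_
              congr 1
              split_ifs with h <;> ring
          _ = ∑ i : Fin (n + 1), ∑ j,
              (if Fin.castLE hn i = j then σ j * (c i / σ' i) else 0) • g j :=
              Finset.sum_comm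
          _ = ∑ i : Fin (n + 1), (σ (Fin.castLE hn i) * (c i / σ' i)) • g (Fin.castLE hn i) := by
              refine Finset.sum_congr rfl fun i _ => ?_
              simp [ite_smul]
          _ = ∑ i : Fin (n + 1), c i • g' i := by
              refine Finset.sum_congr rfl fun i _ => ?_
              have hne : σ' i ≠ 0 := ne_of_gt (hσ'pos i)
              rw [hg']
              congr 1
              field_simp [hσ']
              exact mul_comm _ _
      have hunormsq : ‖u‖ ^ 2 = ∑ i : Fin (n + 1), (c i / σ' i) ^ 2 := by
        rw [hu]
        exact aux_norm_sq_sum (hf.comp _ (Fin.castLE_injective hn)) _ _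
      have hy1sq : ∑ i : Fin (n + 1), (c i) ^ 2 = s ^ 2 := by
        have := aux_norm_sq_sum hg'on c Finset.univ
        rw [hcrep, hy1norm] at this
        exact this.symm
      have hu1 : ‖u‖ ≤ 1 := by
        have hsum : ∑ i : Fin (n + 1), (c i / σ' i) ^ 2
            ≤ ∑ i : Fin (n + 1), (c i) ^ 2 / s ^ 2 := by
          refine Finset.sum_le_sum fun i _ => ?_
          rw [div_pow]
          have h1 : s ^ 2 ≤ σ' i ^ 2 := pow_le_pow_left₀ hs0 (hσ'ge i) 2
          exact div_le_div_of_nonneg_left (sq_nonneg _) (pow_pos hspos 2) h1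
        have h2 : ‖u‖ ^ 2 ≤ 1 := by
          rw [hunormsq]
          calc ∑ i : Fin (n + 1), (c i / σ' i) ^ 2
              ≤ ∑ i : Fin (n + 1), (c i) ^ 2 / s ^ 2 := hsum
            _ = (∑ i : Fin (n + 1), (c i) ^ 2) / s ^ 2 := by rw [Finset.sum_div]
            _ = 1 := by rw [hy1sq]; field_simp
        exact (pow_le_one_iff_of_nonneg (norm_nonneg u) two_ne_zero).mp h2
      have hmem : H u ∈ H '' Metric.closedBall (0 : W) 1 :=
        ⟨u, by simpa using hu1, rfl⟩
      refine le_trans ?_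
        (le_iSup₂ (f := fun y (_ : y ∈ H '' Metric.closedBall (0 : W) 1) =>
          ⨅ z ∈ (V : Set Y), edist y z) (H u) hmem)
      rw [hHu]
      refine le_iInf₂ fun z hz => ?_
      rw [edist_dist]
      refine ENNReal.ofReal_le_ofReal ?_
      have horth : ⟪z, y1⟫ = 0 := (Submodule.mem_orthogonal _ _).mp hy1perp z hz
      have horth' : ⟪y1, z⟫ = 0 := by rw [real_inner_comm]; exact horth
      have hdsq : dist y1 z ^ 2 = ‖y1‖ ^ 2 - 2 * ⟪y1, z⟫ + ‖z‖ ^ 2 := by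
        rw [dist_eq_norm, norm_sub_sq_real]
      rw [horth', hy1norm] at hdsq
      have hsq : s ^ 2 ≤ dist y1 z ^ 2 := by
        rw [hdsq]
        linarith [sq_nonneg ‖z‖]
      exact (pow_le_pow_iff_left₀ hs0 dist_nonneg two_ne_zero).mp hsq
end

section
/- Let T : W → Y be a compact operator between Hilbert spaces and B the closed unit ball of W. Then the Kolmogorov n-width of T(B) satisfies d_n(T(B)) = inf over n-dimensional subspaces Y_n ≤ Y of sup over nonzero x ∈ Y_n^⊥ of sqrt(⟨T T* x, x⟩)/‖x‖. -/
open scoped RealInnerProductSpace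

lemma aux_sup_eq {W Y : Type*} [NormedAddCommGroup W] [InnerProductSpace ℝ W] [CompleteSpace W]
    [NormedAddCommGroup Y] [InnerProductSpace ℝ Y] [CompleteSpace Y]
    (T : W →L[ℝ] Y) (V : Submodule ℝ Y) [FiniteDimensional ℝ V] :
    (⨆ y : T '' Metric.closedBall (0 : W) 1, ⨅ z : V, ‖(y : Y) - (z : Y)‖)
      = ⨆ x : {x : V.orthogonal // (x : Y) ≠ 0},
          ‖ContinuousLinearMap.adjoint T ((x : V.orthogonal) : Y)‖ / ‖((x : V.orthogonal) : Y)‖ := by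
  set T' := ContinuousLinearMap.adjoint T with hT'
  have hRnonneg : (0:ℝ) ≤ ⨆ x : {x : V.orthogonal // (x : Y) ≠ 0}, ‖T' ((x : V.orthogonal) : Y)‖ / ‖((x : V.orthogonal) : Y)‖ :=
    Real.iSup_nonneg fun x => div_nonneg (norm_nonneg _) (norm_nonneg _)
  have hLnonneg : (0:ℝ) ≤ ⨆ y : T '' Metric.closedBall (0 : W) 1, ⨅ z : V, ‖(y : Y) - (z : Y)‖ :=
    Real.iSup_nonneg fun y => Real.iInf_nonneg fun z => norm_nonneg _
  have hRbdd : BddAbove (Set.range fun x : {x : V.orthogonal // (x : Y) ≠ 0} =>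
      ‖T' ((x : V.orthogonal) : Y)‖ / ‖((x : V.orthogonal) : Y)‖) := by
    refine ⟨‖T'‖, Set.forall_mem_range.2 fun x => ?_⟩
    rw [div_le_iff₀ (norm_pos_iff.2 x.2)]
    exact T'.le_opNorm _
  have hLbdd : BddAbove (Set.range fun y : T '' Metric.closedBall (0 : W) 1 =>
      ⨅ z : V, ‖(y : Y) - (z : Y)‖) := by
    refine ⟨‖T‖, Set.forall_mem_range.2 fun y => ?_⟩
    obtain ⟨w, hw, hwy⟩ := y.2
    refine le_trans (ciInf_le ⟨0, Set.forall_mem_range.2 fun z => norm_nonneg _⟩ (⟨0, V.zero_mem⟩ : V)) ?_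
    simp only [Submodule.coe_zero, sub_zero, ← hwy]
    calc ‖T w‖ ≤ ‖T‖ * ‖w‖ := T.le_opNorm w
    _ ≤ ‖T‖ * 1 := by
        exact mul_le_mul_of_nonneg_left (by simpa using mem_closedBall_zero_iff.mp hw) (norm_nonneg T)
    _ = ‖T‖ := mul_one _
  apply le_antisymm
  · refine Real.iSup_le (fun y => ?_) hRnonneg
    obtain ⟨w, hw, hwy⟩ := y.2
    have hw1 : ‖w‖ ≤ 1 := by simpa using mem_closedBall_zero_iff.mp hw
    set x₀ : Y := (y : Y) - V.orthogonalProjectionOnto (y : Y) with hx₀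
    have hx₀mem : x₀ ∈ V.orthogonal := Submodule.sub_starProjection_mem_orthogonal (K := V) _
    have h1 : (⨅ z : V, ‖(y : Y) - (z : Y)‖) ≤ ‖x₀‖ :=
      ciInf_le ⟨0, Set.forall_mem_range.2 fun z => norm_nonneg _⟩ (V.orthogonalProjectionOnto (y : Y))
    refine h1.trans ?_
    rcases eq_or_ne x₀ 0 with h0 | h0
    · simp [h0, hRnonneg]
    · have hsq : ‖x₀‖ * ‖x₀‖ = ⟪x₀, (y : Y)⟫ := by
        have horth : ⟪x₀, ((V.orthogonalProjectionOnto (y : Y)) : Y)⟫ = 0 := by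
          rw [real_inner_comm]; exact hx₀mem _ (V.orthogonalProjectionOnto (y : Y)).2
        rw [← real_inner_self_eq_norm_mul_norm]
        have : ⟪x₀, (y:Y)⟫ = ⟪x₀, x₀⟫ + ⟪x₀, ((V.orthogonalProjectionOnto (y : Y)) : Y)⟫ := by
          rw [← inner_add_right]; congr 1; simp [hx₀]
        rw [this, horth]
        simp
      have hinner : ⟪x₀, (y : Y)⟫ ≤ ‖T' x₀‖ := by
        rw [← hwy]
        have : ⟪x₀, T w⟫ = ⟪T' x₀, w⟫ := by
          rw [hT', ContinuousLinearMap.adjoint_inner_left]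
        rw [this]
        calc ⟪T' x₀, w⟫ ≤ ‖T' x₀‖ * ‖w‖ := real_inner_le_norm _ _
        _ ≤ ‖T' x₀‖ * 1 := mul_le_mul_of_nonneg_left hw1 (norm_nonneg _)
        _ = _ := mul_one _
      have hle : ‖x₀‖ ≤ ‖T' x₀‖ / ‖x₀‖ := by
        rw [le_div_iff₀ (norm_pos_iff.2 h0)]
        rw [mul_comm] at hsq
        calc ‖x₀‖ * ‖x₀‖ = ⟪x₀, (y:Y)⟫ := hsq
        _ ≤ ‖T' x₀‖ := hinner
      exact hle.trans (le_ciSup hRbdd (⟨⟨x₀, hx₀mem⟩, h0⟩ : {x : V.orthogonal // (x : Y) ≠ 0}))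
  · refine Real.iSup_le (fun x => ?_) hLnonneg
    set xv : Y := ((x : V.orthogonal) : Y) with hxv
    have hxmem : xv ∈ V.orthogonal := (x : V.orthogonal).2
    have hx0 : xv ≠ 0 := x.2
    rcases eq_or_ne (T' xv) 0 with h0 | h0
    · simp [h0, hLnonneg]
    · set w : W := ‖T' xv‖⁻¹ • T' xv with hwdef
      have hw1 : ‖w‖ = 1 := by
        rw [hwdef, norm_smul, norm_inv, norm_norm, inv_mul_cancel₀ (norm_ne_zero_iff.2 h0)]
      have hmem : T w ∈ T '' Metric.closedBall (0 : W) 1 :=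
        ⟨w, by simp [mem_closedBall_zero_iff, hw1], rfl⟩
      have key : ‖T' xv‖ / ‖xv‖ ≤ ⨅ z : V, ‖T w - (z : Y)‖ := by
        refine le_ciInf fun z => ?_
        rw [div_le_iff₀ (norm_pos_iff.2 hx0)]
        have h1 : ⟪T w - (z : Y), xv⟫ = ‖T' xv‖ := by
          rw [inner_sub_left]
          have hz : ⟪(z : Y), xv⟫ = 0 := hxmem _ z.2
          rw [hz, sub_zero]
          have : ⟪T w, xv⟫ = ⟪w, T' xv⟫ := by
            rw [hT', ContinuousLinearMap.adjoint_inner_right]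
          rw [this, hwdef, real_inner_smul_left, real_inner_self_eq_norm_mul_norm,
            inv_mul_eq_div]
          field_simp
        calc ‖T' xv‖ = ⟪T w - (z : Y), xv⟫ := h1.symm
        _ ≤ ‖T w - (z : Y)‖ * ‖xv‖ := real_inner_le_norm _ _
      exact key.trans (le_ciSup hLbdd (⟨T w, hmem⟩ : T '' Metric.closedBall (0 : W) 1))

/-- For a compact operator `T : W → Y` between real Hilbert spaces and
`B` the closed unit ball of `W`, the Kolmogorov `n`-width of `T(B)` equals the infimum
over `n`-dimensional subspaces `Y_n ≤ Y` of `sup_{0 ≠ x ∈ Y_nᗮ} sqrt ⟨T T* x, x⟩ / ‖x‖`. -/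
theorem kolmogorovWidth_eq_inf_sup_sqrt_adjoint
    {W Y : Type*} [NormedAddCommGroup W] [InnerProductSpace ℝ W] [CompleteSpace W]
    [NormedAddCommGroup Y] [InnerProductSpace ℝ Y] [CompleteSpace Y]
    (T : W →L[ℝ] Y) (hT : IsCompactOperator T) (n : ℕ) :
    (⨅ (V : Submodule ℝ Y) (_ : FiniteDimensional ℝ V ∧ Module.finrank ℝ V = n),
        ⨆ y : T '' Metric.closedBall (0 : W) 1, ⨅ z : V, ‖(y : Y) - (z : Y)‖)
      = ⨅ (V : Submodule ℝ Y) (_ : FiniteDimensional ℝ V ∧ Module.finrank ℝ V = n),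
          ⨆ x : {x : V.orthogonal // (x : Y) ≠ 0},
            Real.sqrt ⟪T (ContinuousLinearMap.adjoint T ((x : V.orthogonal) : Y)),
              ((x : V.orthogonal) : Y)⟫ / ‖((x : V.orthogonal) : Y)‖ := by
  refine iInf_congr fun V => iInf_congr fun hV => ?_
  have : FiniteDimensional ℝ V := hV.1
  rw [aux_sup_eq T V]
  refine iSup_congr fun x => ?_
  congr 1
  have h2 : ⟪T (ContinuousLinearMap.adjoint T ((x : V.orthogonal) : Y)), ((x : V.orthogonal) : Y)⟫
      = ⟪ContinuousLinearMap.adjoint T ((x : V.orthogonal) : Y),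
          ContinuousLinearMap.adjoint T ((x : V.orthogonal) : Y)⟫ := by
    rw [ContinuousLinearMap.adjoint_inner_left]; exact real_inner_comm _ _
  rw [h2, real_inner_self_eq_norm_sq, Real.sqrt_sq (norm_nonneg _)]
end
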